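/- Every infinite compact topological space whose topology is the order topology of a linear order on it contains a non-trivial convergent sequence. -/

import Mathlib

open Filter Topology Set

/-- An injective monotone-or-antitone sequence in a compact linearly ordered
space converges to the LUB (resp. GLB) of its range. -/
lemma aux_tendsto_of_injective_mono
    {X : Type*} [LinearOrder X] [TopologicalSpace X] [OrderTopology X]
    [CompactSpace X] (u : ℕ → X) (hu : Monotone u ∨ Antitone u)
    (hinj : Function.Injective u) :
    ∃ (a : X), Tendsto u atTop (𝓝 a) ∧ ¬ ∃ c : X, ∀ᶠ n in atTop, u n = c := by
  have hnontrivial : ¬ ∃ c : X, ∀ᶠ n in atTop, u n = c := by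
    rintro ⟨c, hc⟩
    obtain ⟨N, hN⟩ := hc.exists_forall_of_atTop
    have h1 : u N = c := hN N le_rfl
    have h2 : u (N + 1) = c := hN (N + 1) (Nat.le_succ N)
    exact Nat.succ_ne_self N (hinj (h2.trans h1.symm))
  have hcl : IsCompact (closure (range u)) :=
    isClosed_closure.isCompact
  have hne : (closure (range u)).Nonempty :=
    (range_nonempty u).closure
  rcases hu with hmono | hanti
  · obtain ⟨a, -, ha⟩ := hcl.exists_isLUB hne
    rw [IsLUB, upperBounds_closure] at ha
    exact ⟨a, tendsto_atTop_isLUB hmono ha, hnontrivial⟩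
  · obtain ⟨a, -, ha⟩ := hcl.exists_isGLB hne
    rw [IsGLB, lowerBounds_closure] at ha
    exact ⟨a, tendsto_atTop_isGLB hanti ha, hnontrivial⟩

/-- Every infinite compact space whose topology is the order topology of a linear
order contains a non-trivial convergent sequence. -/
theorem ordered_has_nontrivial_convergent_sequence
    {X : Type*} [LinearOrder X] [TopologicalSpace X] [OrderTopology X]
    [CompactSpace X] [Infinite X] :
    ∃ (u : ℕ → X) (a : X), Tendsto u atTop (𝓝 a) ∧
      ¬ ∃ c : X, ∀ᶠ n in atTop, u n = c := by
  by_cases hwf : (Set.univ : Set X).IsWF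
  · -- well-founded case: extract a monotone subsequence of an injection ℕ ↪ X
    have hpwo : (Set.univ : Set X).IsPWO := Set.isPWO_iff_isWF.mpr hwf
    set f : ℕ → X := fun n => Infinite.natEmbedding X n with hf
    have hfinj : Function.Injective f := (Infinite.natEmbedding X).injective
    obtain ⟨g, hg⟩ := hpwo.exists_monotone_subseq (f := f) (fun n => Set.mem_univ _)
    have hinj : Function.Injective (f ∘ g) :=
      hfinj.comp g.injective
    obtain ⟨a, ha, hnt⟩ := aux_tendsto_of_injective_mono (f ∘ g) (Or.inl hg) hinj
    exact ⟨f ∘ g, a, ha, hnt⟩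
  · -- otherwise, there is a strictly decreasing sequence
    rw [Set.isWF_iff_no_descending_seq] at hwf
    push_neg at hwf
    obtain ⟨v, hv, -⟩ := hwf
    obtain ⟨a, ha, hnt⟩ :=
      aux_tendsto_of_injective_mono v (Or.inr hv.antitone) hv.injective
    exact ⟨v, a, ha, hnt⟩
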